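/- Let n, k be positive integers with k ≥ 4, M a set of positive integers with |M| = k containing {k−3, k−2, k−1, k}, and suppose lcm(k−3, k−2, k−1, k) divides n. Then M does not completely split ℤ_n: there is no S ⊆ ℤ_n such that every element of ℤ_n has a unique representation m·s with m ∈ M, s ∈ S. -/

import Mathlib

private lemma aux_card_res {n : ℕ} [NeZero n] (d r : ℕ) (hdn : d ∣ n) (hr : r < d) :
    (Finset.univ.filter fun x : ZMod n => x.val % d = r).card = n / d := by
  have hd0 : 0 < d := lt_of_le_of_lt (Nat.zero_le r) hr
  have hbound : ∀ j, j < n / d → d * j + r < n := by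
    intro j hj
    have h2 : d * (n / d) = n := Nat.mul_div_cancel' hdn
    calc d * j + r < d * j + d := by omega
      _ = d * (j + 1) := by ring
      _ ≤ d * (n / d) := Nat.mul_le_mul_left d hj
      _ = n := h2
  rw [← Finset.card_range (n / d)]
  refine Finset.card_bij' (fun x _ => x.val / d) (fun j _ => ((d * j + r : ℕ) : ZMod n))
    ?_ ?_ ?_ ?_
  · intro x hx
    rw [Finset.mem_range]
    exact Nat.div_lt_div_of_lt_of_dvd hdn (ZMod.val_lt x)
  · intro j hj
    rw [Finset.mem_range] at hj
    rw [Finset.mem_filter]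
    refine ⟨Finset.mem_univ _, ?_⟩
    rw [ZMod.val_cast_of_lt (hbound j hj), Nat.mul_add_mod, Nat.mod_eq_of_lt hr]
  · intro x hx
    have hxv := (Finset.mem_filter.mp hx).2
    show ((d * (x.val / d) + r : ℕ) : ZMod n) = x
    rw [← hxv, Nat.div_add_mod]
    exact ZMod.natCast_rightInverse x
  · intro j hj
    rw [Finset.mem_range] at hj
    show (((d * j + r : ℕ) : ZMod n)).val / d = j
    rw [ZMod.val_cast_of_lt (hbound j hj), Nat.mul_add_div hd0, Nat.div_eq_of_lt hr,
      Nat.add_zero]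

private lemma aux_valmod {n : ℕ} [NeZero n] (d m : ℕ) (s : ZMod n) (hdn : d ∣ n) :
    (m • s).val % d = (m * s.val) % d := by
  rw [nsmul_eq_mul, ZMod.val_mul, Nat.mod_mod_of_dvd _ hdn, ZMod.val_natCast]
  exact ((Nat.mod_modEq m n).of_dvd hdn).mul_right s.val

private lemma aux_count {n : ℕ} [NeZero n] {M : Finset ℕ} {S : Finset (ZMod n)}
    (hS : ∀ x : ZMod n, ∃! p : ℕ × ZMod n, p.1 ∈ M ∧ p.2 ∈ S ∧ p.1 • p.2 = x)
    (P : ZMod n → Prop) [DecidablePred P] :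
    ∑ m ∈ M, (S.filter fun s => P (m • s)).card = (Finset.univ.filter P).card := by
  have hpair : ∀ x : ZMod n, ((M ×ˢ S).filter fun p => p.1 • p.2 = x).card = 1 := by
    intro x
    obtain ⟨p, hp, hu⟩ := hS x
    rw [Finset.card_eq_one]
    refine ⟨p, ?_⟩
    ext q
    simp only [Finset.mem_filter, Finset.mem_product, Finset.mem_singleton]
    constructor
    · rintro ⟨⟨hq1, hq2⟩, hq3⟩
      exact hu q ⟨hq1, hq2, hq3⟩
    · rintro rfl
      exact ⟨⟨hp.1, hp.2.1⟩, hp.2.2⟩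
  have e1 : ∑ m ∈ M, (S.filter fun s => P (m • s)).card
      = ((M ×ˢ S).filter fun p => P (p.1 • p.2)).card := by
    rw [Finset.card_filter, Finset.sum_product]
    refine Finset.sum_congr rfl fun m _ => ?_
    rw [Finset.card_filter]
  rw [e1]
  have e2 : ((M ×ˢ S).filter fun p => P (p.1 • p.2)).card
      = ∑ x ∈ Finset.univ.filter P,
          (((M ×ˢ S).filter fun p => P (p.1 • p.2)).filter fun p => p.1 • p.2 = x).card :=
    Finset.card_eq_sum_card_fiberwise fun p hp => by
      simp only [Finset.mem_coe, Finset.mem_filter, Finset.mem_univ, true_and]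
      exact (Finset.mem_filter.mp hp).2
  rw [e2]
  have e3 : ∀ x ∈ Finset.univ.filter P,
      (((M ×ˢ S).filter fun p => P (p.1 • p.2)).filter fun p => p.1 • p.2 = x).card = 1 := by
    intro x hx
    have hPx : P x := (Finset.mem_filter.mp hx).2
    rw [Finset.filter_filter, ← hpair x]
    congr 1
    refine Finset.filter_congr fun p _ => ?_
    constructor
    · rintro ⟨_, h⟩; exact h
    · intro h; exact ⟨by rw [h]; exact hPx, h⟩
  rw [Finset.sum_congr rfl e3, Finset.sum_const, smul_eq_mul, mul_one]

theorem stmt_7 (n k : ℕ) (hn : 0 < n) (hk : 4 ≤ k)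
    (M : Finset ℕ) (hpos : ∀ m ∈ M, 0 < m) (hcard : M.card = k)
    (hsub : {k - 3, k - 2, k - 1, k} ⊆ M)
    (hlcm : Nat.lcm (Nat.lcm (k - 3) (k - 2)) (Nat.lcm (k - 1) k) ∣ n) :
    ¬ ∃ S : Finset (ZMod n), ∀ x : ZMod n,
      ∃! p : ℕ × ZMod n, p.1 ∈ M ∧ p.2 ∈ S ∧ p.1 • p.2 = x := by
  haveI : NeZero n := ⟨hn.ne'⟩
  rintro ⟨S, hS⟩
  have hk0 : 0 < k := by omega
  have hk10 : 0 < k - 1 := by omega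
  have hkM : k ∈ M := hsub (by simp)
  have hk1M : k - 1 ∈ M := hsub (by simp)
  have hcop : Nat.Coprime (k - 1) k := by
    have h : k = (k - 1) + 1 := by omega
    rw [h]
    simp
  have hdvd : (k - 1) * k ∣ n := by
    have h1 : Nat.lcm (k - 1) k ∣ n := (Nat.dvd_lcm_right _ _).trans hlcm
    rwa [Nat.Coprime.lcm_eq_mul hcop] at h1
  obtain ⟨c, hc⟩ := hdvd
  have hc0 : 0 < c := by
    rcases Nat.eq_zero_or_pos c with h | h
    · rw [h, mul_zero] at hc; omega
    · exact h
  have hkdn : k ∣ n := ⟨(k - 1) * c, by rw [hc]; ring⟩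
  have hk1dn : (k - 1) ∣ n := ⟨k * c, by rw [hc]; ring⟩
  have hkkdn : (k - 1) * k ∣ n := ⟨c, hc⟩
  -- cardinality of S
  have hScard : S.card = (k - 1) * c := by
    have h := aux_count hS (fun _ => True)
    simp only [Finset.filter_true] at h
    rw [Finset.card_univ, ZMod.card, Finset.sum_const, smul_eq_mul, hcard] at h
    have h2 : k * S.card = k * ((k - 1) * c) := by rw [h, hc]; ring
    exact Nat.eq_of_mul_eq_mul_left hk0 h2
  -- Step B : only the row m = k can hit multiples of k
  have hX0 := aux_count hS (fun x => x.val % k = 0)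
  rw [aux_card_res k 0 hkdn hk0] at hX0
  have hnk : n / k = (k - 1) * c := by
    rw [hc, show (k - 1) * k * c = (k - 1) * c * k by ring, Nat.mul_div_cancel _ hk0]
  rw [hnk, ← Finset.sum_erase_add M _ hkM] at hX0
  have hTk : (S.filter fun s => (k • s).val % k = 0).card = (k - 1) * c := by
    rw [Finset.filter_true_of_mem, hScard]
    intro s _
    rw [aux_valmod k k s hkdn, Nat.mul_mod_right]
  rw [hTk] at hX0
  have hzero : ∀ m ∈ M.erase k, (S.filter fun s => (m • s).val % k = 0).card = 0 := by
    intro m hm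
    have hsum0 : ∑ m ∈ M.erase k, (S.filter fun s => (m • s).val % k = 0).card = 0 := by
      omega
    exact Finset.sum_eq_zero_iff.mp hsum0 m hm
  have hB : ∀ m ∈ M, m ≠ k → ∀ s ∈ S, (m • s).val % k ≠ 0 := by
    intro m hm hne s hs hcon
    have h0 := hzero m (Finset.mem_erase.mpr ⟨hne, hm⟩)
    rw [Finset.card_eq_zero, Finset.filter_eq_empty_iff] at h0
    exact h0 hs hcon
  -- Step C : S is thin on multiples of (k-1)
  have hC := aux_count hS (fun x => x.val % ((k - 1) * k) = 0)
  rw [aux_card_res ((k - 1) * k) 0 hkkdn (Nat.mul_pos hk10 hk0)] at hC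
  have hncc : n / ((k - 1) * k) = c := by
    rw [hc, Nat.mul_div_cancel_left _ (Nat.mul_pos hk10 hk0)]
  rw [hncc, ← Finset.sum_erase_add M _ hkM] at hC
  have hzero2 : ∀ m ∈ M.erase k,
      (S.filter fun s => (m • s).val % ((k - 1) * k) = 0).card = 0 := by
    intro m hm
    obtain ⟨hne, hmM⟩ := Finset.mem_erase.mp hm
    rw [Finset.card_eq_zero, Finset.filter_eq_empty_iff]
    intro s hs hcon
    apply hB m hmM hne s hs
    have h1 : (m • s).val % k = (m • s).val % ((k - 1) * k) % k :=
      (Nat.mod_mod_of_dvd _ ⟨k - 1, by ring⟩).symm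
    rw [h1, hcon, Nat.zero_mod]
  rw [Finset.sum_eq_zero hzero2, zero_add] at hC
  have hC0 : (S.filter fun s => s.val % (k - 1) = 0).card = c := by
    rw [← hC]
    refine congrArg Finset.card (Finset.filter_congr fun s _ => ?_)
    rw [aux_valmod ((k - 1) * k) k s hkkdn, mul_comm (k - 1) k, Nat.mul_mod_mul_left]
    constructor
    · intro h; rw [h, mul_zero]
    · intro h
      rcases Nat.mul_eq_zero.mp h with h' | h'
      · omega
      · exact h'
  -- Step D : count multiples of (k-1)
  have hD := aux_count hS (fun x => x.val % (k - 1) = 0)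
  rw [aux_card_res (k - 1) 0 hk1dn hk10] at hD
  have hnk1 : n / (k - 1) = k * c := by
    rw [hc, show (k - 1) * k * c = k * c * (k - 1) by ring, Nat.mul_div_cancel _ hk10]
  rw [hnk1, ← Finset.sum_erase_add M _ hk1M] at hD
  have hUk1 : (S.filter fun s => ((k - 1) • s).val % (k - 1) = 0).card = (k - 1) * c := by
    rw [Finset.filter_true_of_mem, hScard]
    intro s _
    rw [aux_valmod (k - 1) (k - 1) s hk1dn, Nat.mul_mod_right]
  rw [hUk1] at hD
  have hlow : ∀ m ∈ M.erase (k - 1),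
      c ≤ (S.filter fun s => (m • s).val % (k - 1) = 0).card := by
    intro m _
    rw [← hC0]
    apply Finset.card_le_card
    intro s hs
    obtain ⟨hsS, hsv⟩ := Finset.mem_filter.mp hs
    refine Finset.mem_filter.mpr ⟨hsS, ?_⟩
    rw [aux_valmod (k - 1) m s hk1dn, Nat.mul_mod, hsv, mul_zero, Nat.zero_mod]
  have hsumlow : (k - 1) * c ≤ ∑ m ∈ M.erase (k - 1),
      (S.filter fun s => (m • s).val % (k - 1) = 0).card := by
    have h1 := Finset.sum_le_sum hlow
    rwa [Finset.sum_const, smul_eq_mul, Finset.card_erase_of_mem hk1M, hcard] at h1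
  -- final contradiction
  have e1 : (k - 1) * c + c = k * c := by
    have h2 : (k - 1) * c + 1 * c = ((k - 1) + 1) * c := (add_mul _ _ _).symm
    rw [one_mul] at h2
    rw [h2, show (k - 1) + 1 = k by omega]
  have e2 : 3 * c ≤ (k - 1) * c := Nat.mul_le_mul_right c (by omega)
  omega
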